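/- (Proposition 1) Let Δ, v, w, P, t be positive reals, define E_min := (P/(Δ(v+w))) · ∫₀^Δ max(w·t − x, 0) dx and R_sup(t) := 1 − E_min/(t·P·w/(v+w)). Then R_sup(t) ≤ max(1 − w·t/(2Δ), Δ/(2·w·t)). -/

import Mathlib

open MeasureTheory

lemma max_cont (a : ℝ) : Continuous fun x : ℝ => max (a - x) 0 :=
  (continuous_const.sub continuous_id).max continuous_const

lemma integral_linear (a b c : ℝ) : ∫ x in b..c, (a - x) = a * (c - b) - (c^2 - b^2) / 2 := by
  rw [intervalIntegral.integral_sub intervalIntegrable_const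
    (continuous_id'.intervalIntegrable _ _)]
  simp [integral_id, intervalIntegral.integral_const]
  ring

lemma integral_max_small (a Δ : ℝ) (ha : 0 ≤ a) (h : a ≤ Δ) :
    ∫ x in (0:ℝ)..Δ, max (a - x) 0 = a ^ 2 / 2 := by
  have h1 : IntervalIntegrable (fun x : ℝ => max (a - x) 0) volume 0 a :=
    (max_cont a).intervalIntegrable _ _
  have h2 : IntervalIntegrable (fun x : ℝ => max (a - x) 0) volume a Δ :=
    (max_cont a).intervalIntegrable _ _
  rw [← intervalIntegral.integral_add_adjacent_intervals h1 h2]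
  have e1 : ∫ x in (0:ℝ)..a, max (a - x) 0 = ∫ x in (0:ℝ)..a, (a - x) := by
    apply intervalIntegral.integral_congr
    intro x hx
    rw [Set.uIcc_of_le ha] at hx
    exact max_eq_left (by linarith [hx.2])
  have e2 : ∫ x in a..Δ, max (a - x) 0 = 0 := by
    have : ∫ x in a..Δ, max (a - x) 0 = ∫ x in a..Δ, (0:ℝ) := by
      apply intervalIntegral.integral_congr
      intro x hx
      rw [Set.uIcc_of_le h] at hx
      exact max_eq_right (by linarith [hx.1])
    simp [this]
  rw [e1, e2, integral_linear]
  ring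

lemma integral_max_big (a Δ : ℝ) (hΔ : 0 ≤ Δ) (h : Δ ≤ a) :
    ∫ x in (0:ℝ)..Δ, max (a - x) 0 = a * Δ - Δ ^ 2 / 2 := by
  have e1 : ∫ x in (0:ℝ)..Δ, max (a - x) 0 = ∫ x in (0:ℝ)..Δ, (a - x) := by
    apply intervalIntegral.integral_congr
    intro x hx
    rw [Set.uIcc_of_le hΔ] at hx
    exact max_eq_left (by linarith [hx.2])
  rw [e1, integral_linear]
  ring

theorem stmt_3 (Δ v w P t : ℝ) (hΔ : 0 < Δ) (hv : 0 < v) (hw : 0 < w)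
    (hP : 0 < P) (ht : 0 < t)
    (Emin : ℝ) (hEmin : Emin = P / (Δ * (v + w)) * ∫ x in (0:ℝ)..Δ, max (w * t - x) 0)
    (Rsup : ℝ) (hRsup : Rsup = 1 - Emin / (t * P * w / (v + w))) :
    Rsup ≤ max (1 - w * t / (2 * Δ)) (Δ / (2 * w * t)) := by
  have ha : 0 < w * t := mul_pos hw ht
  have hvw : 0 < v + w := by linarith
  rcases le_or_gt (w * t) Δ with hc | hc
  · have := integral_max_small (w * t) Δ ha.le hc
    rw [this] at hEmin
    have : Rsup = 1 - w * t / (2 * Δ) := by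
      rw [hRsup, hEmin]
      field_simp
    rw [this]
    exact le_max_left _ _
  · have := integral_max_big (w * t) Δ hΔ.le hc.le
    rw [this] at hEmin
    have : Rsup = Δ / (2 * w * t) := by
      rw [hRsup, hEmin]
      field_simp
      ring
    rw [this]
    exact le_max_right _ _
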